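/- Abelian property of sandpiles: on a finite graph with sinks, any two maximal sequences of legal topplings starting from the same configuration have the same length, topple each vertex the same number of times, and reach the same final stable configuration. -/
import Mathlib


variable {V : Type*} [Fintype V] [DecidableEq V]

/-- Toppling at vertex `v`: remove `deg v` particles from `v` and send one along
each incident edge. -/
def topple (G : SimpleGraph V) [DecidableRel G.Adj] (c : V → ℕ) (v : V) : V → ℕ :=
  fun w => if w = v then c v - G.degree v else c w + (if G.Adj v w then 1 else 0)

/-- Result of performing the topplings listed in `L`, in order. -/
def runTopplings (G : SimpleGraph V) [DecidableRel G.Adj] (c : V → ℕ) : List V → (V → ℕ)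
  | [] => c
  | v :: L => runTopplings G (topple G c v) L

/-- A sequence of topplings is legal (with sink set `S`) if each toppled vertex is
a non-sink vertex that is unstable at the moment it topples. -/
def LegalSeq (G : SimpleGraph V) [DecidableRel G.Adj] (S : Set V) : (V → ℕ) → List V → Prop
  | _, [] => True
  | c, v :: L => v ∉ S ∧ G.degree v ≤ c v ∧ LegalSeq G S (topple G c v) L

/-- A configuration is stable if every non-sink vertex has fewer particles than its degree. -/
def StableConf (G : SimpleGraph V) [DecidableRel G.Adj] (S : Set V) (c : V → ℕ) : Prop :=
  ∀ v, v ∉ S → c v < G.degree v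

lemma topple_comm (G : SimpleGraph V) [DecidableRel G.Adj] (c : V → ℕ) {v w : V}
    (hvw : v ≠ w) (hv : G.degree v ≤ c v) (hw : G.degree w ≤ c w) :
    topple G (topple G c v) w = topple G (topple G c w) v := by
  funext x
  simp only [topple]
  rcases eq_or_ne x w with rfl | hxw
  · simp only [eq_self_iff_true, if_true, if_neg (Ne.symm hvw), if_neg hvw]
    generalize (if G.Adj v x then 1 else 0) = a
    omega
  · rcases eq_or_ne x v with rfl | hxv
    · simp only [eq_self_iff_true, if_true, if_neg hxw, if_neg hvw]
      generalize (if G.Adj w x then 1 else 0) = a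
      omega
    · simp only [if_neg hxw, if_neg hxv]
      generalize (if G.Adj v x then 1 else 0) = a
      generalize (if G.Adj w x then 1 else 0) = b
      omega

lemma move_front (G : SimpleGraph V) [DecidableRel G.Adj] (S : Set V) :
    ∀ (L : List V) (c : V → ℕ) (v : V), LegalSeq G S c L →
    StableConf G S (runTopplings G c L) → v ∉ S → G.degree v ≤ c v →
    ∃ L', LegalSeq G S c (v :: L') ∧ L'.length + 1 = L.length ∧
      (∀ w, (v :: L').count w = L.count w) ∧
      runTopplings G c (v :: L') = runTopplings G c L := by
  intro L
  induction L with
  | nil => intro c v _ hs hvS hv; exact absurd hv (not_le.2 (hs v hvS))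
  | cons w M ih =>
    intro c v hl hs hvS hv
    obtain ⟨hwS, hw, hM⟩ := hl
    rcases eq_or_ne w v with rfl | hwv
    · exact ⟨M, ⟨hvS, hv, hM⟩, rfl, fun _ => rfl, rfl⟩
    · have hvw : v ≠ w := Ne.symm hwv
      have hv' : G.degree v ≤ topple G c w v := by
        simp only [topple, if_neg hvw]
        exact le_trans hv (Nat.le_add_right _ _)
      obtain ⟨M', hlM', hlen, hcount, hrun⟩ := ih (topple G c w) v hM hs hvS hv'
      obtain ⟨_, _, hM'⟩ := hlM'
      have hcomm := topple_comm G c hvw hv hw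
      have hw' : G.degree w ≤ topple G c v w := by
        simp only [topple, if_neg hwv]
        exact le_trans hw (Nat.le_add_right _ _)
      refine ⟨w :: M', ⟨hvS, hv, hwS, hw', ?_⟩, ?_, ?_, ?_⟩
      · show LegalSeq G S (topple G (topple G c v) w) M'
        rw [hcomm]; exact hM'
      · simp only [List.length_cons]; omega
      · intro x
        have := hcount x
        simp only [List.count_cons] at this ⊢
        omega
      · show runTopplings G (topple G (topple G c v) w) M' =
          runTopplings G (topple G c w) M
        rw [hcomm]; exact hrun

/-- Abelian property of sandpiles: any two legal toppling sequences from the same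
configuration that both terminate in stable configurations have the same length,
topple each vertex the same number of times, and reach the same final stable
configuration. -/
theorem abelian_property (G : SimpleGraph V) [DecidableRel G.Adj] (S : Set V)
    (c : V → ℕ) (L₁ L₂ : List V)
    (h₁ : LegalSeq G S c L₁) (h₂ : LegalSeq G S c L₂)
    (hs₁ : StableConf G S (runTopplings G c L₁))
    (hs₂ : StableConf G S (runTopplings G c L₂)) :
    L₁.length = L₂.length ∧ (∀ v, L₁.count v = L₂.count v) ∧
      runTopplings G c L₁ = runTopplings G c L₂ := by
  induction L₁ generalizing c L₂ with
  | nil =>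
    cases L₂ with
    | nil => exact ⟨rfl, fun _ => rfl, rfl⟩
    | cons w M =>
      obtain ⟨hwS, hw, _⟩ := h₂
      exact absurd hw (not_le.2 (hs₁ w hwS))
  | cons v T ih =>
    obtain ⟨hvS, hv, hT⟩ := h₁
    obtain ⟨L', hlL', hlen, hcount, hrun⟩ := move_front G S L₂ c v h₂ hs₂ hvS hv
    obtain ⟨_, _, hL'⟩ := hlL'
    have hsL' : StableConf G S (runTopplings G (topple G c v) L') := by
      show StableConf G S (runTopplings G c (v :: L'))
      rw [hrun]; exact hs₂
    obtain ⟨ih1, ih2, ih3⟩ := ih (topple G c v) L' hT hL' hs₁ hsL'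
    refine ⟨?_, ?_, ?_⟩
    · simp only [List.length_cons]; omega
    · intro x
      have h1 := ih2 x
      have h2 := hcount x
      simp only [List.count_cons] at h1 h2 ⊢
      omega
    · calc runTopplings G c (v :: T) = runTopplings G (topple G c v) T := rfl
        _ = runTopplings G (topple G c v) L' := ih3
        _ = runTopplings G c L₂ := hrun
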